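/- The q-Fibonacci polynomials satisfy the four-term recurrence F_n(x,s,q) = x·F_{n-1}(x,s,q) + q^{n-2}·s·x·F_{n-3}(x,s,q) + q^{n-2}·s^2·F_{n-4}(x,s,q) for all n ≥ 4. -/

import Mathlib

open Finset

noncomputable section

abbrev K : Type := RatFunc ℚ

def q : K := RatFunc.X

def qint (a : K) (m : ℕ) : K := ∑ i ∈ range m, a ^ i

def qfact (a : K) (m : ℕ) : K := ∏ i ∈ range m, qint a (i + 1)

def qbinom (a : K) (n k : ℕ) : K :=
  if k ≤ n then qfact a n / (qfact a k * qfact a (n - k)) else 0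

/-- q-Fibonacci polynomials F_n(x,s,q) with base `a`. -/
def qF (a x s : K) : ℕ → K
  | 0 => 0
  | n + 1 => ∑ k ∈ range (n / 2 + 1),
      a ^ (k * (k + 1) / 2) * qbinom a (n - k) k * s ^ k * x ^ (n - 2 * k)

/-- q-Lucas polynomials L_n(x,s,q) with base `a` (L_0 = 2). -/
def qL (a x s : K) (n : ℕ) : K :=
  if n = 0 then 2 else
  ∑ k ∈ range (n / 2 + 1),
    a ^ (k * (k - 1) / 2) * (qint a n / qint a (n - k)) * qbinom a (n - k) k
      * s ^ k * x ^ (n - 2 * k)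

/-- Starred variant: L*_0 = 1, L*_n = L_n for n > 0. -/
def qLs (a x s : K) (n : ℕ) : K := if n = 0 then 1 else qL a x s n

/-- Rogers-Szegő polynomial. -/
def rs (a x y : K) (m : ℕ) : K := ∑ j ∈ range (m + 1), qbinom a m j * x ^ j * y ^ (m - j)

/-- q-Pochhammer (q;q)_m. -/
def qpoch (a : K) (m : ℕ) : K := ∏ j ∈ range m, (1 - a ^ (j + 1))

/- ### Auxiliary lemmas -/

lemma q_pow_ne_one (m : ℕ) (hm : m ≠ 0) : q ^ m ≠ 1 := by
  intro h
  have : (Polynomial.X : Polynomial ℚ) ^ m = 1 := by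
    apply RatFunc.algebraMap_injective ℚ
    simpa [map_pow, RatFunc.algebraMap_X, q] using h
  have := congrArg Polynomial.natDegree this
  simp [Polynomial.natDegree_X_pow] at this
  omega

lemma qint_q_ne_zero (m : ℕ) (hm : m ≠ 0) : qint q m ≠ 0 := by
  intro h
  have h2 := geom_sum_mul q m
  rw [show (∑ i ∈ range m, q ^ i) = qint q m from rfl, h, zero_mul] at h2
  have : q ^ m = 1 := by linear_combination -h2
  exact q_pow_ne_one m hm this

lemma qfact_q_ne_zero (m : ℕ) : qfact q m ≠ 0 := by
  unfold qfact
  exact Finset.prod_ne_zero_iff.2 fun i _ => qint_q_ne_zero (i+1) (by omega)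

lemma qbinom_zero_right (n : ℕ) : qbinom q n 0 = 1 := by
  simp [qbinom, qfact, div_self (qfact_q_ne_zero n)]
  rw [show (∏ i ∈ range n, qint q (i+1)) = qfact q n from rfl]
  exact qfact_q_ne_zero n

lemma qbinom_self (n : ℕ) : qbinom q n n = 1 := by
  simp [qbinom, qfact]
  rw [show (∏ i ∈ range n, qint q (i+1)) = qfact q n from rfl]
  exact qfact_q_ne_zero n

lemma qbinom_of_lt {n k : ℕ} (h : ¬ k ≤ n) : qbinom q n k = 0 := by
  simp [qbinom, h]

lemma qint_add (a : K) (i j : ℕ) : qint a (i + j) = qint a i + a ^ i * qint a j := by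
  unfold qint
  rw [Finset.sum_range_add, Finset.mul_sum]
  congr 1
  exact Finset.sum_congr rfl fun k _ => by rw [pow_add]

lemma qfact_succ (m : ℕ) : qfact q (m + 1) = qfact q m * qint q (m + 1) := by
  unfold qfact; rw [Finset.prod_range_succ]

lemma pascalA (m k : ℕ) :
    qbinom q (m + 1) (k + 1) = qbinom q m (k + 1) + q ^ (m - k) * qbinom q m k := by
  rcases lt_trichotomy k m with h | rfl | h
  · obtain ⟨d, rfl⟩ : ∃ d, m = k + d + 1 := ⟨m - k - 1, by omega⟩
    have e1 : qfact q (k + d + 1 + 1) = qfact q (k + d + 1) * qint q (k + d + 2) := by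
      rw [qfact_succ]
    have e2 : qint q (k + d + 2) = qint q (d + 1) + q ^ (d + 1) * qint q (k + 1) := by
      rw [show k + d + 2 = (d + 1) + (k + 1) by ring, qint_add]
    have e3 : qfact q (d + 1) = qfact q d * qint q (d + 1) := qfact_succ d
    have e4 : qfact q (k + 1) = qfact q k * qint q (k + 1) := qfact_succ k
    rw [qbinom, qbinom, qbinom, if_pos (by omega), if_pos (by omega), if_pos (by omega)]
    rw [show k + d + 1 + 1 - (k + 1) = d + 1 by omega, show k + d + 1 - (k + 1) = d by omega,
      show k + d + 1 - k = d + 1 by omega]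
    rw [e1, e2, e3, e4]
    have h1 := qfact_q_ne_zero k
    have h2 := qfact_q_ne_zero d
    have h3 := qint_q_ne_zero (d + 1) (by omega)
    have h4 := qint_q_ne_zero (k + 1) (by omega)
    field_simp
  · rw [qbinom_self, qbinom_of_lt (by omega), qbinom_self]
    simp
  · rw [qbinom_of_lt (by omega), qbinom_of_lt (by omega), qbinom_of_lt (by omega)]
    simp

lemma pascalB (m k : ℕ) :
    qbinom q (m + 1) (k + 1) = q ^ (k + 1) * qbinom q m (k + 1) + qbinom q m k := by
  rcases lt_trichotomy k m with h | rfl | h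
  · obtain ⟨d, rfl⟩ : ∃ d, m = k + d + 1 := ⟨m - k - 1, by omega⟩
    have e1 : qfact q (k + d + 1 + 1) = qfact q (k + d + 1) * qint q (k + d + 2) := by
      rw [qfact_succ]
    have e2 : qint q (k + d + 2) = qint q (k + 1) + q ^ (k + 1) * qint q (d + 1) := by
      rw [show k + d + 2 = (k + 1) + (d + 1) by ring, qint_add]
    have e3 : qfact q (d + 1) = qfact q d * qint q (d + 1) := qfact_succ d
    have e4 : qfact q (k + 1) = qfact q k * qint q (k + 1) := qfact_succ k
    rw [qbinom, qbinom, qbinom, if_pos (by omega), if_pos (by omega), if_pos (by omega)]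
    rw [show k + d + 1 + 1 - (k + 1) = d + 1 by omega, show k + d + 1 - (k + 1) = d by omega,
      show k + d + 1 - k = d + 1 by omega]
    rw [e1, e2, e3, e4]
    have h1 := qfact_q_ne_zero k
    have h2 := qfact_q_ne_zero d
    have h3 := qint_q_ne_zero (d + 1) (by omega)
    have h4 := qint_q_ne_zero (k + 1) (by omega)
    field_simp
    ring
  · rw [qbinom_self, qbinom_of_lt (by omega), qbinom_self]
    simp
  · rw [qbinom_of_lt (by omega), qbinom_of_lt (by omega), qbinom_of_lt (by omega)]
    simp

lemma pascal3 (M k : ℕ) :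
    qbinom q (M + 2) (k + 2) = qbinom q (M + 1) (k + 2) + q ^ (M + 1) * qbinom q M (k + 1)
      + q ^ (M - k) * qbinom q M k := by
  rcases le_or_gt k M with h | h
  · have hA := pascalA (M + 1) (k + 1)
    rw [show M + 1 - (k + 1) = M - k by omega] at hA
    have hB := pascalB M k
    rw [hA, hB]
    rw [show M + 1 = (M - k) + (k + 1) by omega, pow_add]
    ring
  · rw [qbinom_of_lt (by omega), qbinom_of_lt (by omega), qbinom_of_lt (by omega),
      qbinom_of_lt (by omega)]
    simp

lemma tri_succ (j : ℕ) : (j + 1) * (j + 1 + 1) / 2 = j * (j + 1) / 2 + (j + 1) := by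
  obtain ⟨t, ht⟩ := Nat.even_mul_succ_self j
  have h2 : (j + 1) * (j + 1 + 1) = j * (j + 1) + 2 * (j + 1) := by ring
  omega

lemma tri_succ2 (j : ℕ) : (j + 2) * (j + 2 + 1) / 2 = j * (j + 1) / 2 + (2 * j + 3) := by
  obtain ⟨t, ht⟩ := Nat.even_mul_succ_self j
  have h2 : (j + 2) * (j + 2 + 1) = j * (j + 1) + 2 * (2 * j + 3) := by ring
  omega

lemma qF_succ (a x s : K) (n : ℕ) : qF a x s (n + 1) =
    ∑ k ∈ range (n / 2 + 1),
      a ^ (k * (k + 1) / 2) * qbinom a (n - k) k * s ^ k * x ^ (n - 2 * k) := rfl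

lemma term_zero (x s : K) (N k : ℕ) (h : N < 2 * k) :
    q ^ (k * (k + 1) / 2) * qbinom q (N - k) k * s ^ k * x ^ (N - 2 * k) = 0 := by
  rw [qbinom_of_lt (by omega)]; ring

lemma sum_extend {R1 R2 : ℕ} (h : R1 ≤ R2) (f : ℕ → K) (h0 : ∀ k, R1 ≤ k → f k = 0) :
    ∑ k ∈ range R2, f k = ∑ k ∈ range R1, f k := by
  refine (Finset.sum_subset (Finset.range_subset_range.2 h) fun k hk hnk => ?_).symm
  exact h0 k (by simp only [Finset.mem_range] at hnk ⊢; omega)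

def Cf (x s : K) (p : ℕ) : ℕ → K
  | 0 => 0
  | j + 1 => q ^ (p + 3) * s * x *
      (q ^ (j * (j + 1) / 2) * qbinom q (p + 1 - j) j * s ^ j * x ^ (p + 1 - 2 * j))

def Df (x s : K) (p : ℕ) : ℕ → K
  | 0 => 0
  | 1 => 0
  | j + 2 => q ^ (p + 3) * s ^ 2 *
      (q ^ (j * (j + 1) / 2) * qbinom q (p - j) j * s ^ j * x ^ (p - 2 * j))

theorem stmt2 (x s : K) (n : ℕ) (hn : 4 ≤ n) :
    qF q x s n = x * qF q x s (n - 1) + q ^ (n - 2) * s * x * qF q x s (n - 3)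
      + q ^ (n - 2) * s ^ 2 * qF q x s (n - 4) := by
  obtain ⟨m, rfl⟩ : ∃ m, n = m + 4 := ⟨n - 4, by omega⟩
  rcases m with _ | p
  · -- n = 4
    norm_num
    have e4 := qF_succ q x s 3
    have e3 := qF_succ q x s 2
    have e1 := qF_succ q x s 0
    have hP : qbinom q 2 1 = 1 + q := by
      have h := pascalA 1 0
      rwa [qbinom_zero_right, qbinom_self, Nat.sub_zero, pow_one, mul_one] at h
    norm_num [Finset.sum_range_succ, Finset.sum_range_one, qbinom_zero_right,
      qbinom_self, hP] at e4 e3 e1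
    rw [e4, e3, e1, show qF q x s 0 = 0 from rfl]
    ring
  · -- n = p + 5
    rw [show p + 1 + 4 = p + 5 by omega, show p + 5 - 1 = p + 4 by omega,
      show p + 5 - 2 = p + 3 by omega, show p + 5 - 3 = p + 2 by omega,
      show p + 5 - 4 = p + 1 by omega]
    set R := (p + 4) / 2 + 1 with hR
    -- LHS
    have hL : qF q x s (p + 5) = ∑ k ∈ range (R + 2),
        (q ^ (k * (k + 1) / 2) * qbinom q (p + 4 - k) k * s ^ k * x ^ (p + 4 - 2 * k)) := by
      rw [show p + 5 = (p + 4) + 1 by omega, qF_succ]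
      exact (sum_extend (by omega) _ fun k hk => term_zero x s (p + 4) k (by omega)).symm
    have hB : x * qF q x s (p + 4) = ∑ k ∈ range (R + 2),
        x * (q ^ (k * (k + 1) / 2) * qbinom q (p + 3 - k) k * s ^ k * x ^ (p + 3 - 2 * k)) := by
      rw [show p + 4 = (p + 3) + 1 by omega, qF_succ, Finset.mul_sum]
      exact (sum_extend (by omega) _ fun k hk => by
        rw [term_zero x s (p + 3) k (by omega), mul_zero]).symm
    have hC : q ^ (p + 3) * s * x * qF q x s (p + 2) = ∑ k ∈ range (R + 2), Cf x s p k := by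
      rw [show p + 2 = (p + 1) + 1 by omega, qF_succ, Finset.mul_sum]
      rw [Finset.sum_range_succ' (Cf x s p) (R + 1)]
      have : ∀ j, Cf x s p (j + 1) = q ^ (p + 3) * s * x *
          (q ^ (j * (j + 1) / 2) * qbinom q (p + 1 - j) j * s ^ j * x ^ (p + 1 - 2 * j)) :=
        fun j => rfl
      simp only [this, show Cf x s p 0 = 0 from rfl, add_zero]
      exact (sum_extend (by omega) _ fun k hk => by
        rw [term_zero x s (p + 1) k (by omega), mul_zero]).symm
    have hD : q ^ (p + 3) * s ^ 2 * qF q x s (p + 1) = ∑ k ∈ range (R + 2), Df x s p k := by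
      rw [show p + 1 = p + 1 from rfl, qF_succ, Finset.mul_sum]
      rw [Finset.sum_range_succ' (Df x s p) (R + 1),
        Finset.sum_range_succ' (fun j => Df x s p (j + 1)) R]
      have : ∀ j, Df x s p (j + 2) = q ^ (p + 3) * s ^ 2 *
          (q ^ (j * (j + 1) / 2) * qbinom q (p - j) j * s ^ j * x ^ (p - 2 * j)) :=
        fun j => rfl
      simp only [this, show Df x s p 0 = 0 from rfl, show Df x s p 1 = 0 from rfl, add_zero]
      exact (sum_extend (by omega) _ fun k hk => by
        rw [term_zero x s p k (by omega), mul_zero]).symm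
    rw [hL, hB, hC, hD, ← Finset.sum_add_distrib, ← Finset.sum_add_distrib]
    refine Finset.sum_congr rfl fun k _ => ?_
    match k with
    | 0 =>
      simp only [Cf, Df, qbinom_zero_right]
      norm_num
      ring
    | 1 =>
      have hP : qbinom q (p + 3) 1 = qbinom q (p + 2) 1 + q ^ (p + 2) := by
        have := pascalA (p + 2) 0
        rwa [qbinom_zero_right, Nat.sub_zero, mul_one] at this
      simp only [Cf, Df, qbinom_zero_right, Nat.mul_zero, Nat.sub_zero]
      rw [show p + 4 - 1 = p + 3 by omega, show p + 3 - 1 = p + 2 by omega,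
        show p + 4 - 2 * 1 = p + 2 by omega, show p + 3 - 2 * 1 = p + 1 by omega, hP]
      ring
    | (j + 2) =>
      rcases lt_trichotomy (2 * j) p with h | h | h
      · -- 2*j + 1 ≤ p
        obtain ⟨c, rfl⟩ : ∃ c, p = 2 * j + 1 + c := ⟨p - (2 * j + 1), by omega⟩
        have hp3 := pascal3 (j + 1 + c) j
        rw [show j + 1 + c - j = c + 1 by omega] at hp3
        simp only [Cf, Df]
        rw [show 2 * j + 1 + c + 4 - (j + 2) = (j + 1 + c) + 2 by omega,
          show 2 * j + 1 + c + 3 - (j + 2) = (j + 1 + c) + 1 by omega,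
          show 2 * j + 1 + c + 1 - (j + 1) = j + 1 + c by omega,
          show 2 * j + 1 + c - j = j + 1 + c by omega,
          show 2 * j + 1 + c + 4 - 2 * (j + 2) = c + 1 by omega,
          show 2 * j + 1 + c + 3 - 2 * (j + 2) = c by omega,
          show 2 * j + 1 + c + 1 - 2 * (j + 1) = c by omega,
          show 2 * j + 1 + c - 2 * j = c + 1 by omega]
        rw [tri_succ2 j, tri_succ j]
        rw [hp3]
        ring
      · -- 2*j = p
        obtain rfl : p = 2 * j := h.symm
        simp only [Cf, Df]
        rw [show 2 * j + 4 - (j + 2) = j + 2 by omega, qbinom_self,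
          show 2 * j + 3 - (j + 2) = j + 1 by omega, qbinom_of_lt (by omega),
          show 2 * j + 1 - (j + 1) = j by omega, qbinom_of_lt (by omega),
          show 2 * j - j = j by omega, qbinom_self,
          show 2 * j + 4 - 2 * (j + 2) = 0 by omega,
          show 2 * j - 2 * j = 0 by omega]
        rw [tri_succ2 j]
        ring
      · -- 2*j > p
        simp only [Cf, Df]
        rw [qbinom_of_lt (show ¬ (j + 2 ≤ p + 4 - (j + 2)) by omega),
          qbinom_of_lt (show ¬ (j + 2 ≤ p + 3 - (j + 2)) by omega),
          qbinom_of_lt (show ¬ (j + 1 ≤ p + 1 - (j + 1)) by omega),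
          qbinom_of_lt (show ¬ (j ≤ p - j) by omega)]
        ring
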